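/- Let a ≥ 40 be a real number, let n be a sufficiently large integer, and let ε be a real number with 0.5 < ε < 1. Then there exists a univariate real polynomial P : ℝ → ℝ such that: (i) P(x) = (−a)^x for every integer x with 0 ≤ x ≤ ε·n; (ii) |P(x)| ≤ a^x / 2 for every integer x with ε·n < x ≤ n; and (iii) the degree of P is at most (1 + 10/a)·ε·n + 3. -/

import Mathlib

open Finset Polynomial Real

set_option maxHeartbeats 1600000

namespace Stmt2Aux



-- geometric-sum lemma
lemma sum_le_two_mul_last (f : ℕ → ℝ) : ∀ m : ℕ, (∀ j, 0 ≤ f j) → (∀ j < m, 2 * f j ≤ f (j+1)) →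
    ∑ j ∈ range (m+1), f j ≤ 2 * f m := by
  intro m
  induction m with
  | zero => intro h0 _; simp [Finset.sum_range_one]; linarith [h0 0]
  | succ m ih =>
    intro h0 h
    rw [Finset.sum_range_succ]
    have h1 : ∑ j ∈ range (m+1), f j ≤ 2 * f m := ih h0 (fun j hj => h j (by omega))
    have h2 : 2 * f m ≤ f (m+1) := h m (by omega)
    linarith

-- factorial lower bound : (u/3)^u ≤ u!
lemma pow_le_three_pow_mul_factorial : ∀ u : ℕ, (u:ℝ)^u ≤ 3^u * u.factorial := by
  intro u
  induction u with
  | zero => simp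
  | succ u ih =>
    push_cast
    have h1 : ((u:ℝ)+1)^u ≤ 3 * (u:ℝ)^u := by
      rcases Nat.eq_zero_or_pos u with h | h
      · subst h; norm_num
      · have hu : (0:ℝ) < u := by exact_mod_cast h
        have e1 : ((u:ℝ)+1)^u = (u:ℝ)^u * (1 + 1/u)^u := by
          rw [← mul_pow]; congr 1; field_simp
        have e2 : (1 + 1/(u:ℝ))^u ≤ Real.exp (1/u) ^ u := by
          apply pow_le_pow_left₀ (by positivity)
          exact Real.add_one_le_exp _ |>.trans_eq' (by ring_nf)
        have e3 : Real.exp (1/(u:ℝ)) ^ u = Real.exp 1 := by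
          rw [← Real.exp_nat_mul]; congr 1; field_simp
        have e4 : Real.exp 1 ≤ 3 := by
          have := Real.exp_one_lt_d9; linarith
        rw [e1]
        calc (u:ℝ)^u * (1 + 1/u)^u ≤ (u:ℝ)^u * Real.exp 1 := by
              rw [← e3]; exact mul_le_mul_of_nonneg_left e2 (by positivity)
          _ ≤ 3 * (u:ℝ)^u := by
              rw [mul_comm]; exact mul_le_mul_of_nonneg_right e4 (by positivity)
    have h2 : (0:ℝ) ≤ (u:ℝ)+1 := by positivity
    calc ((u:ℝ)+1)^(u+1) = ((u:ℝ)+1)^u * ((u:ℝ)+1) := by ring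
      _ ≤ 3 * (u:ℝ)^u * ((u:ℝ)+1) := by
          exact mul_le_mul_of_nonneg_right h1 h2
      _ ≤ 3 * (3^u * u.factorial) * ((u:ℝ)+1) := by
          apply mul_le_mul_of_nonneg_right _ h2
          exact mul_le_mul_of_nonneg_left ih (by norm_num)
      _ = 3^(u+1) * (u.factorial * ((u:ℝ)+1)) := by ring
      _ = 3^(u+1) * (u+1).factorial := by
          rw [Nat.factorial_succ]; push_cast; ring

-- log t ≤ t / e
lemma log_le_div_e {t : ℝ} (ht : 0 < t) : Real.log t ≤ t / Real.exp 1 := by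
  have h := Real.log_le_sub_one_of_pos (x := t / Real.exp 1) (by positivity)
  rw [Real.log_div (ne_of_gt ht) (by positivity), Real.log_exp] at h
  linarith

-- (c/u)^u ≤ exp (c/e)
lemma pow_div_le_exp (c : ℝ) (hc : 0 ≤ c) (u : ℕ) : (c/u)^u ≤ Real.exp (c / Real.exp 1) := by
  rcases Nat.eq_zero_or_pos u with h | h
  · subst h; simpa using Real.one_le_exp (by positivity)
  rcases eq_or_lt_of_le hc with h0 | h0
  · rw [← h0]
    rw [zero_div, zero_pow (by omega)]
    positivity
  have hu : (0:ℝ) < u := by exact_mod_cast h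
  have hcu : (0:ℝ) < c/u := by positivity
  have : (c/(u:ℝ))^u = Real.exp (u * Real.log (c/u)) := by
    rw [← Real.log_pow, Real.exp_log (by positivity)]
  rw [this]
  apply Real.exp_le_exp.2
  have := log_le_div_e hcu
  calc (u:ℝ) * Real.log (c/u) ≤ u * ((c/u) / Real.exp 1) := by
        exact mul_le_mul_of_nonneg_left this (by positivity)
    _ = c / Real.exp 1 := by field_simp


lemma exp_1920_le : Real.exp (19/20) ≤ 8/3 := by
  have h1 : Real.exp (19/20) * Real.exp (1/20) = Real.exp 1 := by
    rw [← Real.exp_add]; norm_num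
  have h2 : (1:ℝ) + 1/20 ≤ Real.exp (1/20) := by
    have := Real.add_one_le_exp (1/20 : ℝ); linarith
  have h3 : Real.exp 1 < 2.7182818286 := Real.exp_one_lt_d9
  nlinarith [Real.exp_pos (19/20 : ℝ), Real.exp_pos (1/20 : ℝ)]

lemma four_le_exp : (4:ℝ) ≤ Real.exp (7/5) := by
  have h1 : Real.exp (7/5) = Real.exp 1 * Real.exp (1/20) ^ 8 := by
    rw [← Real.exp_nat_mul, ← Real.exp_add]; norm_num
  have h2 : (1:ℝ) + 1/20 ≤ Real.exp (1/20) := by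
    have := Real.add_one_le_exp (1/20 : ℝ); linarith
  have h3 : (2.7182818283:ℝ) < Real.exp 1 := Real.exp_one_gt_d9
  have h4 : ((1:ℝ) + 1/20) ^ 8 ≤ Real.exp (1/20) ^ 8 := by
    apply pow_le_pow_left₀ (by norm_num) h2
  have h5 : ((1:ℝ)+1/20)^8 = 1.4774554437890625 := by norm_num
  rw [h1]
  nlinarith [Real.exp_pos (1/20:ℝ)]

-- log(8/3) ≥ 19/20
lemma log_83 : (19/20 : ℝ) ≤ Real.log (8/3) := by
  rw [← Real.log_exp (19/20)]
  exact Real.log_le_log (Real.exp_pos _) exp_1920_le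

lemma log_4 : Real.log 4 ≤ 7/5 := by
  rw [← Real.log_exp (7/5)]
  exact Real.log_le_log (by norm_num) four_le_exp

lemma denom_prod (K j : ℕ) (hj : j < K) :
    ∏ i ∈ (range K).erase j, |(j:ℝ) - i| = (j.factorial : ℝ) * (K - 1 - j).factorial := by
  have hsplit : (range K).erase j = range j ∪ Ico (j+1) K := by
    ext i; simp [Finset.mem_erase, Finset.mem_range, Finset.mem_Ico]; omega
  have hdisj : Disjoint (range j) (Ico (j+1) K) := by
    rw [Finset.disjoint_left]; intro i hi hi2
    simp [Finset.mem_range, Finset.mem_Ico] at hi hi2; omega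
  rw [hsplit, Finset.prod_union hdisj]
  have h1 : ∏ i ∈ range j, |(j:ℝ) - i| = (j.factorial : ℝ) := by
    have : ∀ i ∈ range j, |(j:ℝ) - i| = ((j - i : ℕ) : ℝ) := by
      intro i hi
      rw [Finset.mem_range] at hi
      rw [Nat.cast_sub hi.le, abs_of_nonneg]
      have : (i:ℝ) < j := by exact_mod_cast hi
      linarith
    rw [Finset.prod_congr rfl this, ← Nat.cast_prod]
    congr 1
    rw [← Nat.descFactorial_eq_prod_range, Nat.descFactorial_self]
  have h2 : ∏ i ∈ Ico (j+1) K, |(j:ℝ) - i| = ((K - 1 - j).factorial : ℝ) := by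
    have : ∀ i ∈ Ico (j+1) K, |(j:ℝ) - i| = ((i - j : ℕ) : ℝ) := by
      intro i hi
      rw [Finset.mem_Ico] at hi
      have hij : j < i := hi.1
      rw [Nat.cast_sub hij.le, abs_sub_comm, abs_of_nonneg]
      have : (j:ℝ) < i := by exact_mod_cast hij
      linarith
    rw [Finset.prod_congr rfl this, ← Nat.cast_prod]
    congr 1
    rw [Finset.prod_Ico_eq_prod_range]
    have : ∀ i ∈ range (K - (j+1)), (j + 1 + i - j) = i + 1 := by intro i _; omega
    rw [Finset.prod_congr rfl this, Finset.prod_range_add_one_eq_factorial]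
    congr 1; omega
  rw [h1, h2]

lemma numer_prod (K x : ℕ) (hx : K ≤ x) :
    ∏ i ∈ range K, ((x:ℝ) - i) = (x.descFactorial K : ℝ) := by
  rw [Nat.descFactorial_eq_prod_range, Nat.cast_prod]
  apply Finset.prod_congr rfl
  intro i hi
  rw [Finset.mem_range] at hi
  rw [Nat.cast_sub (by omega)]


lemma eval_basis_prod (K j : ℕ) (x : ℝ) :
    Polynomial.eval x (Lagrange.basis (range K) (fun i : ℕ => (i:ℝ)) j)
      = ∏ i ∈ (range K).erase j, (((j:ℝ) - i)⁻¹ * (x - i)) := by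
  rw [Lagrange.basis, Polynomial.eval_prod]
  apply Finset.prod_congr rfl
  intro i _
  simp [Lagrange.basisDivisor]


lemma abs_eval_basis (K j x : ℕ) (hj : j < K) (hx : K ≤ x) :
    |Polynomial.eval (x:ℝ) (Lagrange.basis (range K) (fun i : ℕ => (i:ℝ)) j)|
      = (x.descFactorial K : ℝ) / (((x:ℝ) - j) * ((j.factorial : ℝ) * (K-1-j).factorial)) := by
  have hxj : (0:ℝ) < (x:ℝ) - j := by
    have : (j:ℝ) < x := by exact_mod_cast lt_of_lt_of_le hj hx
    linarith
  have hxi : ∀ i ∈ (range K).erase j, (0:ℝ) ≤ (x:ℝ) - i := by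
    intro i hi
    have : i < K := Finset.mem_range.mp (Finset.mem_of_mem_erase hi)
    have : (i:ℝ) < x := by exact_mod_cast lt_of_lt_of_le this hx
    linarith
  have hmem : j ∈ range K := Finset.mem_range.mpr hj
  have hsplit : ((x:ℝ) - j) * ∏ i ∈ (range K).erase j, ((x:ℝ) - i) = (x.descFactorial K : ℝ) := by
    rw [← numer_prod K x hx, ← Finset.mul_prod_erase (range K) (fun i => (x:ℝ) - i) hmem]
  calc |Polynomial.eval (x:ℝ) (Lagrange.basis (range K) (fun i : ℕ => (i:ℝ)) j)|
      = ∏ i ∈ (range K).erase j, |((j:ℝ) - i)⁻¹ * ((x:ℝ) - i)| := by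
        rw [eval_basis_prod, Finset.abs_prod]
    _ = ∏ i ∈ (range K).erase j, (|(j:ℝ) - i|⁻¹ * ((x:ℝ) - i)) := by
        apply Finset.prod_congr rfl
        intro i hi
        rw [abs_mul, abs_inv, abs_of_nonneg (hxi i hi)]
    _ = (∏ i ∈ (range K).erase j, |(j:ℝ) - i|)⁻¹ * ∏ i ∈ (range K).erase j, ((x:ℝ) - i) := by
        rw [Finset.prod_mul_distrib, ← Finset.prod_inv_distrib]
    _ = (x.descFactorial K : ℝ) / (((x:ℝ) - j) * ((j.factorial : ℝ) * (K-1-j).factorial)) := by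
        rw [denom_prod K j hj]
        have h2 : ∏ i ∈ (range K).erase j, ((x:ℝ) - i)
            = (x.descFactorial K : ℝ) / ((x:ℝ) - j) := by
          rw [eq_div_iff hxj.ne']
          linarith [hsplit]
        rw [h2, inv_mul_eq_div, div_div]

lemma abs_eval_basis_le (K j x : ℕ) (hj : j < K) (hx : K ≤ x) :
    |Polynomial.eval (x:ℝ) (Lagrange.basis (range K) (fun i : ℕ => (i:ℝ)) j)|
      ≤ (x.choose K : ℝ) * (K.choose j : ℝ) := by
  have hnat : x.descFactorial K
      = x.choose K * (K.choose j * ((K - j) * (j.factorial * (K-1-j).factorial))) := by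
    rw [Nat.descFactorial_eq_factorial_mul_choose]
    have h1 : K.choose j * j.factorial * (K-j).factorial = K.factorial :=
      Nat.choose_mul_factorial_mul_factorial hj.le
    have h2 : (K - j).factorial = (K - j) * (K-1-j).factorial := by
      have h3 : K - j = (K-1-j) + 1 := by omega
      rw [h3, Nat.factorial_succ]
    rw [← h1, h2]; ring
  rw [abs_eval_basis K j x hj hx, hnat]
  have hxj : (0:ℝ) < (x:ℝ) - j := by
    have : (j:ℝ) < x := by exact_mod_cast lt_of_lt_of_le hj hx
    linarith
  have hf : (0:ℝ) < (j.factorial : ℝ) * ((K-1-j).factorial : ℝ) := by positivity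
  have hKjx : ((K - j : ℕ) : ℝ) ≤ (x:ℝ) - j := by
    rw [Nat.cast_sub hj.le]
    have : (K:ℝ) ≤ x := by exact_mod_cast hx
    linarith
  push_cast
  rw [div_le_iff₀ (by positivity)]
  have hc1 : (0:ℝ) ≤ (x.choose K : ℝ) * (K.choose j : ℝ) := by positivity
  have key : ((K-j : ℕ) : ℝ) * ((j.factorial : ℝ) * ((K-1-j).factorial : ℝ))
      ≤ ((x:ℝ)-j) * ((j.factorial : ℝ) * ((K-1-j).factorial : ℝ)) :=
    mul_le_mul_of_nonneg_right hKjx hf.le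
  have final := mul_le_mul_of_nonneg_left key hc1
  nlinarith [final]

end Stmt2Aux

open Stmt2Aux

/-- For every real `a ≥ 40`, every sufficiently large integer `n`, and every
real `ε` with `0.5 < ε < 1`, there is a univariate real polynomial `P` with
`P(x) = (-a)^x` for integers `0 ≤ x ≤ ε·n`, `|P(x)| ≤ a^x/2` for integers `ε·n < x ≤ n`,
and `deg P ≤ (1 + 10/a)·ε·n + 3`. -/
theorem stmt2 :
    ∃ n₀ : ℕ, ∀ a : ℝ, 40 ≤ a → ∀ n : ℕ, n₀ ≤ n → ∀ ε : ℝ, 0.5 < ε → ε < 1 →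
      ∃ P : Polynomial ℝ,
        (∀ x : ℕ, (x : ℝ) ≤ ε * n → P.eval (x : ℝ) = (-a) ^ x) ∧
        (∀ x : ℕ, ε * n < (x : ℝ) → x ≤ n → |P.eval (x : ℝ)| ≤ a ^ x / 2) ∧
        (P.natDegree : ℝ) ≤ (1 + 10 / a) * ε * n + 3 := by
  use 100
  intro a ha n hn ε hε1 hε2
  have ha0 : (0:ℝ) < a := by linarith
  have hn0 : (0:ℝ) < n := by
    have : (100:ℝ) ≤ n := by exact_mod_cast hn
    linarith
  have hεn0 : (0:ℝ) ≤ ε * n := by nlinarith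
  set m : ℕ := ⌊ε * n⌋₊ with hm_def
  set c : ℕ := ⌈10 * (m:ℝ) / a⌉₊ with hc_def
  set K : ℕ := m + c + 3 with hK_def
  have hmK : m < K := by omega
  have hm_le : (m:ℝ) ≤ ε * n := Nat.floor_le hεn0
  have hm_gt : ε * n < (m:ℝ) + 1 := Nat.lt_floor_add_one _
  have hc_ge : 10 * (m:ℝ) / a ≤ c := Nat.le_ceil _
  have hc_lt : (c:ℝ) < 10 * (m:ℝ) / a + 1 := Nat.ceil_lt_add_one (by positivity)
  have hm_half : (n:ℝ)/2 - 1 ≤ m := by nlinarith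
  have hinj : Set.InjOn (fun i : ℕ => (i:ℝ)) ↑(range K) := fun i _ j _ h => by simpa using h
  set P : Polynomial ℝ :=
    ∑ j ∈ range (m+1), Polynomial.C ((-a)^j) * Lagrange.basis (range K) (fun i : ℕ => (i:ℝ)) j
    with hP_def
  have hevalP : ∀ x : ℝ, P.eval x
      = ∑ j ∈ range (m+1), (-a)^j * Polynomial.eval x (Lagrange.basis (range K) (fun i : ℕ => (i:ℝ)) j) := by
    intro x
    rw [hP_def, Polynomial.eval_finset_sum]
    apply Finset.sum_congr rfl
    intro j _
    rw [Polynomial.eval_mul, Polynomial.eval_C]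
  refine ⟨P, ?_, ?_, ?_⟩
  · -- (i) interpolation on [0, m]
    intro x hx
    have hxm : x ≤ m := Nat.le_floor hx
    have hxK : x ∈ range K := Finset.mem_range.mpr (by omega)
    rw [hevalP]
    rw [Finset.sum_eq_single_of_mem x (Finset.mem_range.mpr (by omega))]
    · have h1 : Polynomial.eval ((x:ℕ):ℝ) (Lagrange.basis (range K) (fun i : ℕ => (i:ℝ)) x) = 1 :=
        Lagrange.eval_basis_self hinj hxK
      rw [h1, mul_one]
    · intro j _ hne
      have h0 : Polynomial.eval ((x:ℕ):ℝ) (Lagrange.basis (range K) (fun i : ℕ => (i:ℝ)) j) = 0 :=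
        Lagrange.eval_basis_of_ne hne hxK
      rw [h0, mul_zero]
  · -- (ii) smallness on (εn, n]
    intro x hx1 hx2
    have hmx : m < x := by
      by_contra h
      push_neg at h
      have : (x:ℝ) ≤ m := by exact_mod_cast h
      linarith
    by_cases hxK : x < K
    · -- x is a node with value 0
      have : P.eval (x:ℝ) = 0 := by
        rw [hevalP]
        apply Finset.sum_eq_zero
        intro j hj
        rw [Finset.mem_range] at hj
        have hne : j ≠ x := by omega
        rw [Lagrange.eval_basis_of_ne hne (Finset.mem_range.mpr hxK), mul_zero]
      rw [this, abs_zero]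
      positivity
    · -- the analytic estimate
      push_neg at hxK
      -- |P(x)| ≤ ∑ a^j |Lⱼ(x)|
      have step1 : |P.eval (x:ℝ)| ≤
          ∑ j ∈ range (m+1), a^j * ((x.choose K : ℝ) * (K.choose j : ℝ)) := by
        rw [hevalP]
        refine (Finset.abs_sum_le_sum_abs _ _).trans ?_
        apply Finset.sum_le_sum
        intro j hj
        rw [abs_mul, abs_pow, abs_neg, abs_of_pos ha0]
        have hjK : j < K := by
          rw [Finset.mem_range] at hj; omega
        exact mul_le_mul_of_nonneg_left (abs_eval_basis_le K j x hjK hxK) (by positivity)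
      -- ratio bound: sum ≤ 2 * last term
      have step2 : ∑ j ∈ range (m+1), a^j * ((x.choose K : ℝ) * (K.choose j : ℝ))
          ≤ (x.choose K : ℝ) * (2 * ((K.choose m : ℝ) * a^m)) := by
        have e1 : ∀ j ∈ range (m+1), a^j * ((x.choose K : ℝ) * (K.choose j : ℝ))
            = (x.choose K : ℝ) * ((K.choose j : ℝ) * a^j) := by intro j _; ring
        rw [Finset.sum_congr rfl e1, ← Finset.mul_sum]
        apply mul_le_mul_of_nonneg_left _ (by positivity)
        exact sum_le_two_mul_last (fun j => (K.choose j : ℝ) * a^j) m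
          (fun j => by positivity)
          (fun j hj => by
            -- 2 * (C(K,j) a^j) ≤ C(K,j+1) a^(j+1)
            have key : 2 * (K.choose j : ℝ) ≤ a * (K.choose (j+1) : ℝ) := by
              have hratio : (K.choose (j+1) : ℝ) * (j+1) = (K.choose j : ℝ) * (K - j : ℕ) := by
                exact_mod_cast congrArg (Nat.cast : ℕ → ℝ) (Nat.choose_succ_right_eq K j)
              have hKj : ((K - j : ℕ) : ℝ) = (K:ℝ) - j := by
                rw [Nat.cast_sub (by omega)]
              rw [hKj] at hratio
              have hcpos : (0:ℝ) < (K.choose j : ℝ) := by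
                exact_mod_cast Nat.choose_pos (by omega : j ≤ K)
              have hac : 10 * (m:ℝ) ≤ a * c := by
                rw [mul_comm a c]
                calc 10 * (m:ℝ) = (10 * (m:ℝ) / a) * a := by field_simp
                  _ ≤ c * a := mul_le_mul_of_nonneg_right hc_ge ha0.le
              have hterm : 2 * ((j:ℝ)+1) ≤ a * ((K:ℝ) - j) := by
                have hj1 : (j:ℝ) + 1 ≤ m := by
                  have : j + 1 ≤ m := hj
                  exact_mod_cast this
                have hKr : (K:ℝ) = m + c + 3 := by
                  rw [hK_def]; push_cast; ring
                have : a * ((K:ℝ) - j) ≥ a * c := by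
                  apply mul_le_mul_of_nonneg_left _ ha0.le
                  rw [hKr]
                  have : (j:ℝ) ≤ m := by linarith
                  linarith
                nlinarith
              have hjpos : (0:ℝ) < (j:ℝ) + 1 := by positivity
              -- from hratio : C(K,j+1)(j+1) = C(K,j)(K−j)
              -- a*C(K,j+1) = a*C(K,j)(K−j)/(j+1) ≥ 2 C(K,j)
              have : a * ((K.choose (j+1) : ℝ) * (j+1)) ≥ 2 * (K.choose j : ℝ) * (j+1) := by
                rw [hratio]
                nlinarith
              nlinarith
            calc 2 * ((K.choose j : ℝ) * a^j) = (2 * (K.choose j : ℝ)) * a^j := by ring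
              _ ≤ (a * (K.choose (j+1) : ℝ)) * a^j :=
                  mul_le_mul_of_nonneg_right key (by positivity)
              _ = (K.choose (j+1) : ℝ) * a^(j+1) := by ring
          )
      -- final: C(x,K) * 2 * C(K,m) * a^m ≤ a^x / 2
      have step3 : (x.choose K : ℝ) * (2 * ((K.choose m : ℝ) * a^m)) ≤ a^x / 2 := by
        set s1 : ℕ := c + 3 with hs1_def
        set u : ℕ := x - K with hu_def
        have hxmsu : x = m + s1 + u := by omega
        have hapow : a^x = a^m * a^s1 * a^u := by
          rw [hxmsu, pow_add, pow_add]
        -- C(K,m) ≤ (3a/8)^s1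
        have hCKm : (K.choose m : ℝ) ≤ (3*a/8)^s1 := by
          have hsym : K.choose m = K.choose s1 := by
            have : s1 = K - m := by omega
            rw [this, Nat.choose_symm (by omega : m ≤ K)]
          have h1 : (s1.factorial : ℝ) * (K.choose s1 : ℝ) ≤ (K:ℝ)^s1 := by
            have := Nat.descFactorial_le_pow K s1
            rw [Nat.descFactorial_eq_factorial_mul_choose] at this
            exact_mod_cast this
          have h2 : (s1:ℝ)^s1 ≤ 3^s1 * s1.factorial := pow_le_three_pow_mul_factorial s1
          have hs1pos : (0:ℝ) < s1 := by
            have : 0 < s1 := by omega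
            exact_mod_cast this
          have hfpos : (0:ℝ) < (s1.factorial : ℝ) := by
            exact_mod_cast s1.factorial_pos
          -- C(K,s1) ≤ (3K/s1)^s1
          have h3 : (K.choose s1 : ℝ) ≤ (3*(K:ℝ)/s1)^s1 := by
            rw [div_pow, mul_pow]
            rw [le_div_iff₀ (by positivity)]
            calc (K.choose s1 : ℝ) * (s1:ℝ)^s1 ≤ (K.choose s1 : ℝ) * (3^s1 * s1.factorial) :=
                  mul_le_mul_of_nonneg_left h2 (by positivity)
              _ = 3^s1 * ((s1.factorial : ℝ) * (K.choose s1 : ℝ)) := by ring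
              _ ≤ 3^s1 * (K:ℝ)^s1 := mul_le_mul_of_nonneg_left h1 (by positivity)
              _ = 3^s1 * (K:ℝ)^s1 := rfl
          have h4 : 3*(K:ℝ)/s1 ≤ 3*a/8 := by
            rw [div_le_div_iff₀ hs1pos (by norm_num)]
            -- 24 K ≤ 3 a s1 ⟸ 8K ≤ a s1
            have hKr : (K:ℝ) = m + c + 3 := by rw [hK_def]; push_cast; ring
            have hs1r : (s1:ℝ) = c + 3 := by rw [hs1_def]; push_cast; ring
            have hac : 10 * (m:ℝ) ≤ a * c := by
              rw [mul_comm a c]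
              calc 10 * (m:ℝ) = (10 * (m:ℝ) / a) * a := by field_simp
                _ ≤ c * a := mul_le_mul_of_nonneg_right hc_ge ha0.le
            have hc8 : 8 * (c:ℝ) ≤ 2 * m + 16 := by
              -- c < 10m/a + 1 and a ≥ 40 ⇒ 8c < 80m/a + 8 ≤ 2m + 8
              have : (c:ℝ) < 10 * (m:ℝ) / a + 1 := hc_lt
              have h40 : 10 * (m:ℝ) / a ≤ (m:ℝ) / 4 := by
                rw [div_le_div_iff₀ ha0 (by norm_num)]
                nlinarith [Nat.cast_nonneg (α := ℝ) m]
              nlinarith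
            rw [hKr, hs1r]
            nlinarith [Nat.cast_nonneg (α := ℝ) m, Nat.cast_nonneg (α := ℝ) c]
          calc (K.choose m : ℝ) = (K.choose s1 : ℝ) := by rw [hsym]
            _ ≤ (3*(K:ℝ)/s1)^s1 := h3
            _ ≤ (3*a/8)^s1 := by
                apply pow_le_pow_left₀ (by positivity) h4
        -- C(x,K) ≤ a^u * exp(3n/(a e))
        have hCxK : (x.choose K : ℝ) ≤ a^u * Real.exp ((3*(n:ℝ)/a) / Real.exp 1) := by
          have hsym : x.choose K = x.choose u := by
            have : u = x - K := hu_def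
            rw [this, Nat.choose_symm hxK]
          have h1 : (u.factorial : ℝ) * (x.choose u : ℝ) ≤ (n:ℝ)^u := by
            have h1a := Nat.descFactorial_le_pow x u
            rw [Nat.descFactorial_eq_factorial_mul_choose] at h1a
            have h1b : (u.factorial : ℝ) * (x.choose u : ℝ) ≤ (x:ℝ)^u := by exact_mod_cast h1a
            refine h1b.trans ?_
            apply pow_le_pow_left₀ (by positivity)
            exact_mod_cast hx2
          have h2 : (u:ℝ)^u ≤ 3^u * u.factorial := pow_le_three_pow_mul_factorial u
          have hfpos : (0:ℝ) < (u.factorial : ℝ) := by exact_mod_cast u.factorial_pos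
          -- C(x,u) ≤ (3n/u)^u
          have h3 : (x.choose u : ℝ) ≤ (3*(n:ℝ)/u)^u := by
            rcases Nat.eq_zero_or_pos u with h | h
            · rw [h]; simp
            have hupos : (0:ℝ) < u := by exact_mod_cast h
            rw [div_pow, mul_pow, le_div_iff₀ (by positivity)]
            calc (x.choose u : ℝ) * (u:ℝ)^u ≤ (x.choose u : ℝ) * (3^u * u.factorial) :=
                  mul_le_mul_of_nonneg_left h2 (by positivity)
              _ = 3^u * ((u.factorial : ℝ) * (x.choose u : ℝ)) := by ring
              _ ≤ 3^u * (n:ℝ)^u := mul_le_mul_of_nonneg_left h1 (by positivity)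
          have h4 : (3*(n:ℝ)/u)^u = a^u * ((3*(n:ℝ)/a)/u)^u := by
            rw [← mul_pow]
            congr 1
            rcases Nat.eq_zero_or_pos u with h | h
            · rw [h]; simp
            have hupos : (0:ℝ) < (u:ℝ) := by exact_mod_cast h
            field_simp
          have h5 : ((3*(n:ℝ)/a)/u)^u ≤ Real.exp ((3*(n:ℝ)/a) / Real.exp 1) :=
            pow_div_le_exp _ (by positivity) u
          calc (x.choose K : ℝ) = (x.choose u : ℝ) := by rw [hsym]
            _ ≤ (3*(n:ℝ)/u)^u := h3
            _ = a^u * ((3*(n:ℝ)/a)/u)^u := h4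
            _ ≤ a^u * Real.exp ((3*(n:ℝ)/a) / Real.exp 1) :=
                mul_le_mul_of_nonneg_left h5 (by positivity)
        -- numeric core: 4 * exp(3n/(ae)) ≤ (8/3)^s1
        have hcore : 4 * Real.exp ((3*(n:ℝ)/a) / Real.exp 1) ≤ (8/3:ℝ)^s1 := by
          have he1 : (8/3:ℝ)^s1 = Real.exp (s1 * Real.log (8/3)) := by
            rw [← Real.log_pow, Real.exp_log (by positivity)]
          have he4 : (4:ℝ) = Real.exp (Real.log 4) := by
            rw [Real.exp_log]; norm_num
          rw [he1, he4, ← Real.exp_add, Real.exp_le_exp]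
          -- log 4 + 3n/(a e) ≤ s1 * log(8/3)
          have hs1lb : 10 * (m:ℝ) / a + 3 ≤ s1 := by
            have hs1r : (s1:ℝ) = c + 3 := by rw [hs1_def]; push_cast; ring
            rw [hs1r]; linarith [hc_ge]
          have hlog83pos : (0:ℝ) < Real.log (8/3) := lt_of_lt_of_le (by norm_num) log_83
          have hstep : (10 * (m:ℝ) / a + 3) * (19/20) ≤ (s1:ℝ) * Real.log (8/3) := by
            have h1 : (10 * (m:ℝ) / a + 3) * (19/20) ≤ (s1:ℝ) * (19/20) := by
              apply mul_le_mul_of_nonneg_right hs1lb (by norm_num)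
            have h2 : (s1:ℝ) * (19/20) ≤ (s1:ℝ) * Real.log (8/3) := by
              apply mul_le_mul_of_nonneg_left log_83 (by positivity)
            linarith
          have he : (2.7182818283:ℝ) < Real.exp 1 := Real.exp_one_gt_d9
          have h3e : 3*(n:ℝ)/a / Real.exp 1 ≤ 1.104 * ((n:ℝ)/a) := by
            have hq0 : (0:ℝ) ≤ (n:ℝ)/a := by positivity
            rw [div_le_iff₀ (Real.exp_pos 1)]
            have key : 1.104 * ((n:ℝ)/a) * 2.7182818283 ≤ 1.104 * ((n:ℝ)/a) * Real.exp 1 :=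
              mul_le_mul_of_nonneg_left he.le (by positivity)
            have hr : 3*(n:ℝ)/a = 3*((n:ℝ)/a) := by ring
            nlinarith [key, hq0]
          have hma : (5*(n:ℝ) - 10)/a ≤ 10 * (m:ℝ) / a :=
            (div_le_div_iff_of_pos_right ha0).mpr (by linarith)
          have hma' : 5*((n:ℝ)/a) - 10/a ≤ 10 * (m:ℝ) / a := by
            have : (5*(n:ℝ) - 10)/a = 5*((n:ℝ)/a) - 10/a := by ring
            linarith [hma, this.symm.le, this.le]
          have h95 : (10:ℝ)/a ≤ 1/4 := by
            rw [div_le_iff₀ ha0]; linarith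
          have hq0 : (0:ℝ) ≤ (n:ℝ)/a := by positivity
          linarith [log_4, h3e, hstep, hma', h95, hq0]
        -- assemble
        have hfinal : (x.choose K : ℝ) * (2 * ((K.choose m : ℝ) * a^m)) ≤
            (a^u * Real.exp ((3*(n:ℝ)/a) / Real.exp 1)) * (2 * ((3*a/8)^s1 * a^m)) := by
          apply mul_le_mul hCxK _ (by positivity) (by positivity)
          have := mul_le_mul_of_nonneg_right hCKm (by positivity : (0:ℝ) ≤ a^m)
          linarith
        refine hfinal.trans ?_
        rw [hapow]
        have hexpand : (a^u * Real.exp ((3*(n:ℝ)/a) / Real.exp 1)) * (2 * ((3*a/8)^s1 * a^m))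
            = (a^m * a^s1 * a^u) * ((4 * Real.exp ((3*(n:ℝ)/a) / Real.exp 1)) * ((3/8:ℝ)^s1)) / 2 := by
          rw [show ((3:ℝ)*a/8)^s1 = (3/8:ℝ)^s1 * a^s1 by rw [← mul_pow]; congr 1; ring]
          ring
        rw [hexpand]
        set E := Real.exp ((3*(n:ℝ)/a) / Real.exp 1) with hE_def
        have hprod : (8/3:ℝ)^s1 * (3/8:ℝ)^s1 = 1 := by
          rw [← mul_pow]; norm_num
        have h38pos : (0:ℝ) ≤ (3/8:ℝ)^s1 := by positivity
        have hsmall : 4 * E * (3/8:ℝ)^s1 ≤ 1 := by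
          have := mul_le_mul_of_nonneg_right hcore h38pos
          linarith [this, hprod.le, hprod.ge]
        have hB : (0:ℝ) ≤ a^m * a^s1 * a^u := by positivity
        have := mul_le_mul_of_nonneg_left hsmall hB
        linarith
      calc |P.eval (x:ℝ)| ≤ _ := step1
        _ ≤ _ := step2
        _ ≤ a^x/2 := step3
  · -- degree bound
    have hdeg : P.natDegree ≤ K - 1 := by
      rw [hP_def]
      apply Polynomial.natDegree_sum_le_of_forall_le
      intro j hj
      refine (Polynomial.natDegree_C_mul_le _ _).trans ?_
      rw [Lagrange.natDegree_basis hinj (Finset.mem_range.mpr (by rw [Finset.mem_range] at hj; omega))]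
      simp
    have hK1 : ((K - 1 : ℕ) : ℝ) = (m:ℝ) + c + 2 := by
      have : K - 1 = m + c + 2 := by omega
      rw [this]; push_cast; ring
    have h1 : (P.natDegree : ℝ) ≤ ((K-1 : ℕ) : ℝ) := by exact_mod_cast hdeg
    rw [hK1] at h1
    refine h1.trans ?_
    have h2 : 10 * (m:ℝ) / a ≤ 10 * (ε * n) / a :=
      (div_le_div_iff_of_pos_right ha0).mpr (by linarith)
    have h3 : (c:ℝ) ≤ 10 * (ε*n) / a + 1 := by linarith
    have : (1 + 10/a) * ε * n = ε * n + 10 * (ε*n)/a := by field_simp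
    linarith
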